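/- Let t ≤ K−1, let v₁, …, v_t ∈ ℝ^K be linearly independent with all entries of v₁ strictly positive, let Γ be a K×K stochastic matrix of full rank, and let F₁, …, F_K be pairwise distinct distribution functions on S. Then there exist y ∈ S and j ∈ {1,…,t} such that, with D_y = diag(F₁(y), …, F_K(y)), the K×(t+1) matrix [Γv₁, …, Γv_t, D_y Γ v_j] has full rank t+1. -/

import Mathlib

open MeasureTheory in
/-- Key technical lemma: given linearly independent `v₁,…,v_t` (entries of `v₁` positive),
a full-rank stochastic matrix `Γ` and pairwise distinct distribution functions
`F₁,…,F_K` on `S ⊆ ℝ^q`, there are `y ∈ S` and `j ≤ t` with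
`[Γv₁, …, Γv_t, D_y Γ v_j]` of full rank `t+1`. -/
theorem exists_point_extending_rank
    {q K t : ℕ} (ht : 0 < t) (htK : t ≤ K - 1)
    (v : Fin t → (Fin K → ℝ)) (hv : LinearIndependent ℝ v)
    (hv1pos : ∀ k, 0 < v ⟨0, ht⟩ k)
    (Γ : Matrix (Fin K) (Fin K) ℝ)
    (hΓnonneg : ∀ i j, 0 ≤ Γ i j)
    (hΓrows : ∀ i, ∑ j, Γ i j = 1)
    (hΓrank : IsUnit Γ)
    (S : Set (Fin q → ℝ))
    (μ : Fin K → Measure (Fin q → ℝ)) (hprob : ∀ k, IsProbabilityMeasure (μ k))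
    (F : Fin K → (Fin q → ℝ) → ℝ)
    (hF : ∀ k y, F k y = (μ k {x | x ≤ y}).toReal)
    (hdistinct : ∀ i j : Fin K, i ≠ j → ∃ y ∈ S, F i y ≠ F j y) :
    ∃ y ∈ S, ∃ j : Fin t,
      LinearIndependent ℝ
        (Fin.snoc (fun i : Fin t => Γ.mulVec (v i))
          ((Matrix.diagonal (fun k => F k y)).mulVec (Γ.mulVec (v j)))
          : Fin (t + 1) → (Fin K → ℝ)) := by
  classical
  have hK2 : 2 ≤ K := by omega
  set f : Fin t → (Fin K → ℝ) := fun i => Γ.mulVec (v i) with hf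
  set W : Submodule ℝ (Fin K → ℝ) := Submodule.span ℝ (Set.range f) with hW
  -- `f` is linearly independent
  have hinj : Function.Injective Γ.mulVec := Matrix.mulVec_injective_iff_isUnit.mpr hΓrank
  have hfind : LinearIndependent ℝ f := by
    have : f = (Matrix.mulVecLin Γ) ∘ v := rfl
    rw [this]
    exact hv.map' (Matrix.mulVecLin Γ) (LinearMap.ker_eq_bot.mpr hinj)
  by_contra hcon
  push_neg at hcon
  -- every `D_y (f j)` lies in `W`
  have hmem : ∀ y ∈ S, ∀ j : Fin t,
      (Matrix.diagonal (fun k => F k y)).mulVec (f j) ∈ W := by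
    intro y hy j
    by_contra hnot
    exact hcon y hy j (linearIndependent_fin_snoc.mpr ⟨hfind, hnot⟩)
  -- `W` is invariant under each `D_y`, `y ∈ S`
  have hinv : ∀ y ∈ S, ∀ w ∈ W, (Matrix.diagonal (fun k => F k y)).mulVec w ∈ W := by
    intro y hy w hw
    have hle : W.map ((Matrix.diagonal (fun k => F k y)).mulVecLin) ≤ W := by
      rw [hW, Submodule.map_span, Submodule.span_le]
      rintro _ ⟨_, ⟨j, rfl⟩, rfl⟩
      simpa using hmem y hy j
    exact hle ⟨w, hw, by simp⟩
  -- a point of `S`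
  have h01 : (⟨0, by omega⟩ : Fin K) ≠ ⟨1, by omega⟩ := by
    intro h; exact absurd (congrArg Fin.val h) (by simp)
  obtain ⟨y0, hy0, -⟩ := hdistinct _ _ h01
  -- `w0 := f ⟨0, ht⟩` has all positive entries
  obtain ⟨j0, -, hj0⟩ := Finset.exists_min_image Finset.univ (v ⟨0, ht⟩)
    ⟨⟨0, by omega⟩, Finset.mem_univ _⟩
  have hw0pos : ∀ k, 0 < f ⟨0, ht⟩ k := by
    intro k
    have h1 : v ⟨0, ht⟩ j0 = ∑ j, Γ k j * v ⟨0, ht⟩ j0 := by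
      rw [← Finset.sum_mul, hΓrows, one_mul]
    have h2 : ∑ j, Γ k j * v ⟨0, ht⟩ j0 ≤ ∑ j, Γ k j * v ⟨0, ht⟩ j :=
      Finset.sum_le_sum fun j _ =>
        mul_le_mul_of_nonneg_left (hj0 j (Finset.mem_univ j)) (hΓnonneg k j)
    have : 0 < ∑ j, Γ k j * v ⟨0, ht⟩ j := lt_of_lt_of_le (h1 ▸ hv1pos j0) h2
    simpa [hf, Matrix.mulVec, dotProduct] using this
  have hw0W : f ⟨0, ht⟩ ∈ W := Submodule.subset_span ⟨⟨0, ht⟩, rfl⟩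
  -- every standard basis vector lies in `W`
  have hsingle : ∀ k : Fin K, Pi.single k (1 : ℝ) ∈ W := by
    intro k
    have hz : ∀ i : Fin K, ∃ p, p ∈ S ∧ (i ≠ k → F i p ≠ F k p) := by
      intro i
      by_cases h : i = k
      · exact ⟨y0, hy0, fun h' => absurd h h'⟩
      · obtain ⟨p, hp, hne⟩ := hdistinct i k h
        exact ⟨p, hp, fun _ => hne⟩
    choose z hzS hzne using hz
    set c : Fin K → Fin K → ℝ := fun i m => F m (z i) - F i (z i) with hc
    have key : ∀ T : Finset (Fin K), ∀ w ∈ W,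
        (fun m => (∏ i ∈ T, c i m) * w m) ∈ W := by
      intro T
      induction T using Finset.induction_on with
      | empty => intro w hw; simpa using hw
      | insert a T ha ih =>
        intro w hw
        have hu := ih w hw
        have h1 := hinv (z a) (hzS a) _ hu
        have h2 : (fun m => (∏ i ∈ insert a T, c i m) * w m)
            = (Matrix.diagonal (fun k => F k (z a))).mulVec
                (fun m => (∏ i ∈ T, c i m) * w m)
              - F a (z a) • (fun m => (∏ i ∈ T, c i m) * w m) := by
          funext m
          simp only [Finset.prod_insert ha, Pi.sub_apply, Pi.smul_apply, smul_eq_mul,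
            Matrix.mulVec_diagonal, hc]
          ring
        rw [h2]
        exact Submodule.sub_mem W h1 (Submodule.smul_mem W _ hu)
    have huW := key (Finset.univ.erase k) _ hw0W
    set u : Fin K → ℝ := fun m => (∏ i ∈ Finset.univ.erase k, c i m) * f ⟨0, ht⟩ m with hu
    have huk : u k ≠ 0 := by
      refine mul_ne_zero (Finset.prod_ne_zero_iff.mpr fun i hi => ?_) (ne_of_gt (hw0pos k))
      have hik : i ≠ k := (Finset.mem_erase.mp hi).1
      exact sub_ne_zero.mpr (Ne.symm (hzne i hik))
    have hum : ∀ m, m ≠ k → u m = 0 := by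
      intro m hm
      have : (∏ i ∈ Finset.univ.erase k, c i m) = 0 :=
        Finset.prod_eq_zero (Finset.mem_erase.mpr ⟨hm, Finset.mem_univ m⟩) (by simp [hc])
      simp [hu, this]
    have heq : Pi.single k (1 : ℝ) = (u k)⁻¹ • u := by
      funext m
      by_cases h : m = k
      · subst h; simp [Pi.single_eq_same, inv_mul_cancel₀ huk]
      · simp [Pi.single_eq_of_ne h, hum m h]
    rw [heq]
    exact Submodule.smul_mem W _ huW
  -- therefore `W = ⊤`
  have hWtop : W = ⊤ := by
    rw [eq_top_iff, ← (Pi.basisFun ℝ (Fin K)).span_eq, Submodule.span_le]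
    rintro _ ⟨i, rfl⟩
    simpa using hsingle i
  -- dimension count gives a contradiction
  haveI : Fintype (Set.range f) := Set.fintypeRange f
  have hdim1 : Module.finrank ℝ W ≤ t := by
    calc Module.finrank ℝ W ≤ (Set.range f).toFinset.card := finrank_span_le_card _
      _ ≤ Finset.univ.card := by
          rw [Set.toFinset_range]; exact Finset.card_image_le
      _ = t := Finset.card_univ.trans (Fintype.card_fin t)
  have hdim2 : Module.finrank ℝ W = K := by
    rw [hWtop, finrank_top, Module.finrank_fin_fun]
  omega
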